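/- Let R be a commutative ring and S, c_1, c_2 ∈ R. In R[[t]], the coefficient of t^3 in 12(c_1 t + (6c_1S − 5S^2)t^2) · ((1 + St)(1 + 6c_1 t − 5St))^{-1} · (1 + c_1 t + c_2 t^2) equals 12(c_1c_2 + 30c_1^3 − 80c_1^2S + 70c_1S^2 − 20S^3). -/

import Mathlib

open PowerSeries

/-- Calabi–Yau specialization `L = c₁` of the E₈-model generating function:
coefficient of `t^3`, the Euler characteristic of the elliptically fibered
Calabi–Yau fourfold E₈-model. -/
theorem euler_e8_CY4 {R : Type*} [CommRing R] (S c₁ c₂ : R) :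
    (PowerSeries.coeff (R := R) 3)
      (12 * (C (R := R) c₁ * X + (6 * C (R := R) c₁ * C (R := R) S - 5 * C (R := R) S ^ 2) * X ^ 2) *
        Ring.inverse ((1 + C (R := R) S * X) * (1 + 6 * C (R := R) c₁ * X - 5 * C (R := R) S * X)) *
        (1 + C (R := R) c₁ * X + C (R := R) c₂ * X ^ 2))
      = 12 * (c₁ * c₂ + 30 * c₁ ^ 3 - 80 * c₁ ^ 2 * S + 70 * c₁ * S ^ 2
          - 20 * S ^ 3) := by
  set u : R⟦X⟧ := (1 + C (R := R) S * X) * (1 + 6 * C (R := R) c₁ * X - 5 * C (R := R) S * X) with hu_def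
  set a : R := 6 * c₁ - 4 * S with ha
  set b : R := 6 * c₁ * S - 5 * S ^ 2 with hb
  have hu_eq : u = 1 + C (R := R) a * X + C (R := R) b * X ^ 2 := by
    rw [hu_def, ha, hb]
    push_cast [map_sub, map_mul, map_ofNat, map_pow]
    ring
  have hunit : IsUnit u := by
    rw [PowerSeries.isUnit_iff_constantCoeff]
    have : constantCoeff (R := R) u = 1 := by
      rw [hu_eq]; simp
    rw [this]; exact isUnit_one
  set E : R⟦X⟧ := 12 * (C (R := R) c₁ * X + (6 * C (R := R) c₁ * C (R := R) S - 5 * C (R := R) S ^ 2) * X ^ 2) *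
        Ring.inverse u * (1 + C (R := R) c₁ * X + C (R := R) c₂ * X ^ 2) with hE_def
  have hA : E * u = 12 * (C (R := R) c₁ * X + (6 * C (R := R) c₁ * C (R := R) S - 5 * C (R := R) S ^ 2) * X ^ 2) *
      (1 + C (R := R) c₁ * X + C (R := R) c₂ * X ^ 2) := by
    rw [hE_def]
    have := Ring.inverse_mul_cancel u hunit
    calc 12 * (C (R := R) c₁ * X + (6 * C (R := R) c₁ * C (R := R) S - 5 * C (R := R) S ^ 2) * X ^ 2) *
        Ring.inverse u * (1 + C (R := R) c₁ * X + C (R := R) c₂ * X ^ 2) * u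
        = 12 * (C (R := R) c₁ * X + (6 * C (R := R) c₁ * C (R := R) S - 5 * C (R := R) S ^ 2) * X ^ 2) *
        (1 + C (R := R) c₁ * X + C (R := R) c₂ * X ^ 2) * (Ring.inverse u * u) := by ring
      _ = _ := by rw [this, mul_one]
  have hA2 : E + C (R := R) a * (E * X ^ 1) + C (R := R) b * (E * X ^ 2)
      = C (R := R) (12 * c₁) * X + C (R := R) (12 * (6 * c₁ * S - 5 * S ^ 2 + c₁ ^ 2)) * X ^ 2
        + C (R := R) (12 * (c₁ * c₂ + c₁ * (6 * c₁ * S - 5 * S ^ 2))) * X ^ 3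
        + C (R := R) (12 * (c₂ * (6 * c₁ * S - 5 * S ^ 2))) * X ^ 4 := by
    have h := hA
    rw [hu_eq] at h
    push_cast [map_mul, map_add, map_sub, map_pow, map_ofNat] at *
    linear_combination h
  have h0 := congrArg (coeff (R := R) 0) hA2
  have h1 := congrArg (coeff (R := R) 1) hA2
  have h2 := congrArg (coeff (R := R) 2) hA2
  have h3 := congrArg (coeff (R := R) 3) hA2
  simp only [map_add] at h0 h1 h2 h3
  simp only [coeff_mul_X_pow', coeff_C_mul, coeff_X, coeff_one, coeff_X_pow] at h0 h1 h2 h3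
  norm_num [coeff_C] at h0 h1 h2 h3
  have hs : (coeff (R := R) 1) ((C (R := R)) S ^ 2) = 0 := by rw [← map_pow, coeff_C]; norm_num
  have hc : (coeff (R := R) 1) ((C (R := R)) c₁ ^ 2) = 0 := by rw [← map_pow, coeff_C]; norm_num
  rw [hs, hc] at h3
  show coeff (R := R) 3 E = _
  rw [ha] at *
  rw [hb] at *
  linear_combination h3 - (6*c₁-4*S)*h2 + ((6*c₁-4*S)^2 - (6*c₁*S-5*S^2))*h1
    + (-(6*c₁-4*S)^3 + 2*(6*c₁-4*S)*(6*c₁*S-5*S^2))*h0
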